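/- Let d > 0, a₂ > 0, b > 0, and ρ₀ > 0. Then there exists a constant C > 0 such that for all sufficiently small r ∈ (0, ρ₀), the integral ∫_r^{ρ₀} exp(−π(r^{−d} − ρ^{−d})/(a₂ d)) ρ^{2b+d−1} dρ is at most C·r^{2b+2d}. -/

import Mathlib

open Real Filter Asymptotics MeasureTheory Set Topology

noncomputable def trigamma (y : ℝ) : ℝ := ∑' m : ℕ, 1 / (m + y)^2

noncomputable def psi2 (y : ℝ) : ℝ := -2 * ∑' m : ℕ, 1 / (m + y)^3


lemma aux_exp_small (A d M : ℝ) (hA : 0 < A) (hd : 0 < d) :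
    ∀ᶠ r in 𝓝[>] (0:ℝ), Real.exp (-A * r^(-d)) ≤ r^M := by
  have h1 : Tendsto (fun x : ℝ => x ^ (M/d) * Real.exp (-A * x)) atTop (𝓝 0) :=
    tendsto_rpow_mul_exp_neg_mul_atTop_nhds_zero _ _ hA
  have h2 : Tendsto (fun x : ℝ => (x^d) ^ (M/d) * Real.exp (-A * x^d)) atTop (𝓝 0) :=
    h1.comp (tendsto_rpow_atTop hd)
  have h3 : Tendsto (fun r : ℝ => ((r⁻¹)^d) ^ (M/d) * Real.exp (-A * (r⁻¹)^d))
      (𝓝[>] (0:ℝ)) (𝓝 0) := h2.comp tendsto_inv_nhdsGT_zero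
  have h4 : ∀ᶠ r in 𝓝[>] (0:ℝ),
      ((r⁻¹)^d) ^ (M/d) * Real.exp (-A * (r⁻¹)^d) < 1 :=
    h3.eventually_lt_const one_pos
  filter_upwards [h4, self_mem_nhdsWithin] with r hr4 hr
  have e1 : (r⁻¹)^d = r^(-d) := by
    rw [Real.inv_rpow hr.le, ← Real.rpow_neg hr.le]
  have e2 : ((r⁻¹)^d)^(M/d) = r^(-M) := by
    rw [e1, ← Real.rpow_mul hr.le]
    congr 1
    field_simp
  rw [e2, e1] at hr4
  have hpos : (0:ℝ) < r^M := Real.rpow_pos_of_pos hr M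
  calc Real.exp (-A * r^(-d)) = r^M * (r^(-M) * Real.exp (-A * r^(-d))) := by
        rw [← mul_assoc, ← Real.rpow_add hr, add_neg_cancel, Real.rpow_zero, one_mul]
    _ ≤ r^M * 1 := mul_le_mul_of_nonneg_left hr4.le hpos.le
    _ = r^M := mul_one _

theorem stmt11 (d a₂ b ρ₀ : ℝ) (hd : 0 < d) (ha : 0 < a₂) (hb : 0 < b) (hρ : 0 < ρ₀) :
    ∃ C > 0, ∀ᶠ r in 𝓝[>] (0:ℝ), r < ρ₀ →
      (∫ ρ in r..ρ₀, Real.exp (-π * (r^(-d) - ρ^(-d)) / (a₂*d)) * ρ^(2*b+d-1))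
        ≤ C * r^(2*b+2*d) := by
  set c : ℝ := π / (a₂ * d) with hc
  have hc0 : 0 < c := div_pos Real.pi_pos (by positivity)
  have h2d : (2:ℝ)^(-d) < 1 :=
    Real.rpow_lt_one_of_one_lt_of_neg one_lt_two (by linarith)
  set A : ℝ := c * (1 - 2^(-d)) with hA
  have hA0 : 0 < A := mul_pos hc0 (by linarith)
  refine ⟨2^(2*b+2*d)/(c*d) + ρ₀^(2*b+d+1)/2, by positivity, ?_⟩
  have h2 : ∀ᶠ r in 𝓝[>] (0:ℝ), r < ρ₀/2 := by
    filter_upwards [Ioo_mem_nhdsGT_of_mem (Set.left_mem_Ico.mpr (show (0:ℝ) < ρ₀/2 by positivity))] with x hx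
    exact hx.2
  filter_upwards [self_mem_nhdsWithin, h2, aux_exp_small A d (2*b+2*d+1) hA0 hd]
    with r hr hhalf hexp _
  have hr0 : (0:ℝ) < r := hr
  have h2r : (0:ℝ) < 2*r := by linarith
  have hr2ρ : 2*r ≤ ρ₀ := by linarith
  have hrle : r ≤ 2*r := by linarith
  -- continuity
  have hbase : ContinuousOn (fun ρ : ℝ => ρ^(-d)) (Set.Ioi (0:ℝ)) :=
    continuousOn_id.rpow_const (fun x hx => Or.inl (ne_of_gt hx))
  have hcont : ContinuousOn
      (fun ρ : ℝ => Real.exp (-π * (r^(-d) - ρ^(-d)) / (a₂*d)) * ρ^(2*b+d-1))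
      (Set.Ioi (0:ℝ)) := by
    refine ContinuousOn.mul ?_ (continuousOn_id.rpow_const (fun x hx => Or.inl (ne_of_gt hx)))
    exact Real.continuous_exp.comp_continuousOn
      ((continuousOn_const.mul (continuousOn_const.sub hbase)).div_const _)
  have hsub1 : Set.uIcc r (2*r) ⊆ Set.Ioi (0:ℝ) := by
    rw [Set.uIcc_of_le hrle]; intro x hx; exact lt_of_lt_of_le hr0 hx.1
  have hsub2 : Set.uIcc (2*r) ρ₀ ⊆ Set.Ioi (0:ℝ) := by
    rw [Set.uIcc_of_le hr2ρ]; intro x hx; exact lt_of_lt_of_le h2r hx.1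
  have hint1 : IntervalIntegrable
      (fun ρ : ℝ => Real.exp (-π * (r^(-d) - ρ^(-d)) / (a₂*d)) * ρ^(2*b+d-1))
      volume r (2*r) := (hcont.mono hsub1).intervalIntegrable
  have hint2 : IntervalIntegrable
      (fun ρ : ℝ => Real.exp (-π * (r^(-d) - ρ^(-d)) / (a₂*d)) * ρ^(2*b+d-1))
      volume (2*r) ρ₀ := (hcont.mono hsub2).intervalIntegrable
  rw [← intervalIntegral.integral_add_adjacent_intervals hint1 hint2]
  -- == Part 1 ==
  have hgcont : ContinuousOn (fun ρ : ℝ => Real.exp (c*ρ^(-d)) * ρ^(-d-1)) (Set.Ioi (0:ℝ)) := by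
    refine ContinuousOn.mul ?_ (continuousOn_id.rpow_const (fun x hx => Or.inl (ne_of_gt hx)))
    exact Real.continuous_exp.comp_continuousOn (continuousOn_const.mul hbase)
  have hderiv : ∀ x ∈ Set.uIcc r (2*r),
      HasDerivAt (fun ρ : ℝ => -(Real.exp (c*ρ^(-d))/(c*d)))
        (Real.exp (c*x^(-d)) * x^(-d-1)) x := by
    intro x hx
    have hx0 : (0:ℝ) < x := hsub1 hx
    have h1 : HasDerivAt (fun ρ : ℝ => ρ^(-d)) (-d * x^(-d-1)) x := by
      exact Real.hasDerivAt_rpow_const (Or.inl hx0.ne')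
    have h3 := (((h1.const_mul c).exp).div_const (c*d)).neg
    refine h3.congr_deriv ?_
    have hcd : c*d ≠ 0 := by positivity
    field_simp
  have hFTC := intervalIntegral.integral_eq_sub_of_hasDerivAt hderiv
    ((hgcont.mono hsub1).intervalIntegrable)
  have claim1 : (∫ ρ in r..(2*r), Real.exp (-π * (r^(-d) - ρ^(-d)) / (a₂*d)) * ρ^(2*b+d-1))
      ≤ 2^(2*b+2*d)/(c*d) * r^(2*b+2*d) := by
    have hintg : IntervalIntegrable
        (fun ρ : ℝ => (2*r)^(2*b+2*d) * Real.exp (-c*r^(-d)) *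
          (Real.exp (c*ρ^(-d)) * ρ^(-d-1))) volume r (2*r) :=
      ((hgcont.mono hsub1).intervalIntegrable).const_mul _
    have hmono : ∀ x ∈ Set.Icc r (2*r),
        Real.exp (-π * (r^(-d) - x^(-d)) / (a₂*d)) * x^(2*b+d-1)
          ≤ (2*r)^(2*b+2*d) * Real.exp (-c*r^(-d)) * (Real.exp (c*x^(-d)) * x^(-d-1)) := by
      intro x hx
      have hx0 : (0:ℝ) < x := lt_of_lt_of_le hr0 hx.1
      have e1 : -π * (r^(-d) - x^(-d)) / (a₂*d) = -c*r^(-d) + c*x^(-d) := by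
        rw [hc]; field_simp; ring
      have e2 : x^(2*b+d-1) = x^(2*b+2*d) * x^(-d-1) := by
        rw [← Real.rpow_add hx0]; congr 1; ring
      have e3 : x^(2*b+2*d) ≤ (2*r)^(2*b+2*d) :=
        Real.rpow_le_rpow hx0.le hx.2 (by positivity)
      calc Real.exp (-π * (r^(-d) - x^(-d)) / (a₂*d)) * x^(2*b+d-1)
          = x^(2*b+2*d) * (Real.exp (-c*r^(-d)) * (Real.exp (c*x^(-d)) * x^(-d-1))) := by
            rw [e1, e2, Real.exp_add]; ring
        _ ≤ (2*r)^(2*b+2*d) * (Real.exp (-c*r^(-d)) * (Real.exp (c*x^(-d)) * x^(-d-1))) := by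
            apply mul_le_mul_of_nonneg_right e3
            positivity
        _ = (2*r)^(2*b+2*d) * Real.exp (-c*r^(-d)) * (Real.exp (c*x^(-d)) * x^(-d-1)) := by
            ring
    have hI1 := intervalIntegral.integral_mono_on hrle hint1 hintg hmono
    rw [intervalIntegral.integral_const_mul, hFTC] at hI1
    refine hI1.trans ?_
    have hexp2r : 0 < Real.exp (c*(2*r)^(-d))/(c*d) := by positivity
    have key : Real.exp (-c*r^(-d)) *
        (-(Real.exp (c*(2*r)^(-d))/(c*d)) - -(Real.exp (c*r^(-d))/(c*d))) ≤ 1/(c*d) := by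
      have h5 : Real.exp (-c*r^(-d)) * (Real.exp (c*r^(-d))/(c*d)) = 1/(c*d) := by
        rw [← mul_div_assoc, ← Real.exp_add,
          show -c*r^(-d) + c*r^(-d) = 0 by ring, Real.exp_zero]
      nlinarith [Real.exp_pos (-c*r^(-d)), mul_pos (Real.exp_pos (-c*r^(-d))) hexp2r]
    have h2rM : (2*r)^(2*b+2*d) = 2^(2*b+2*d) * r^(2*b+2*d) :=
      Real.mul_rpow (by norm_num) hr0.le
    calc (2*r)^(2*b+2*d) * Real.exp (-c*r^(-d)) *
          (-(Real.exp (c*(2*r)^(-d))/(c*d)) - -(Real.exp (c*r^(-d))/(c*d)))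
        = (2*r)^(2*b+2*d) * (Real.exp (-c*r^(-d)) *
          (-(Real.exp (c*(2*r)^(-d))/(c*d)) - -(Real.exp (c*r^(-d))/(c*d)))) := by ring
      _ ≤ (2*r)^(2*b+2*d) * (1/(c*d)) := by
          apply mul_le_mul_of_nonneg_left key (by positivity)
      _ = 2^(2*b+2*d)/(c*d) * r^(2*b+2*d) := by rw [h2rM]; ring
  -- == Part 2 ==
  have claim2 : (∫ ρ in (2*r)..ρ₀, Real.exp (-π * (r^(-d) - ρ^(-d)) / (a₂*d)) * ρ^(2*b+d-1))
      ≤ ρ₀^(2*b+d+1)/2 * r^(2*b+2*d) := by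
    set K : ℝ := Real.exp (-A*r^(-d)) * (ρ₀^(2*b+d)/(2*r)) with hK
    have hK0 : 0 ≤ K := by positivity
    have hmono2 : ∀ x ∈ Set.Icc (2*r) ρ₀,
        Real.exp (-π * (r^(-d) - x^(-d)) / (a₂*d)) * x^(2*b+d-1) ≤ K := by
      intro x hx
      have hx0 : (0:ℝ) < x := lt_of_lt_of_le h2r hx.1
      have hxd : x^(-d) ≤ (2*r)^(-d) := by
        rw [Real.rpow_neg hx0.le, Real.rpow_neg h2r.le]
        exact inv_anti₀ (Real.rpow_pos_of_pos h2r d)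
          (Real.rpow_le_rpow h2r.le hx.1 hd.le)
      have h2rd : (2*r)^(-d) = 2^(-d) * r^(-d) := Real.mul_rpow (by norm_num) hr0.le
      have hexple : -π * (r^(-d) - x^(-d)) / (a₂*d) ≤ -A*r^(-d) := by
        have e1 : -π * (r^(-d) - x^(-d)) / (a₂*d) = -c*(r^(-d) - x^(-d)) := by
          rw [hc]; field_simp
        rw [e1, hA]
        have hrd0 : (0:ℝ) < r^(-d) := Real.rpow_pos_of_pos hr0 _
        nlinarith [hxd, h2rd, hc0]
      have hpow : x^(2*b+d-1) ≤ ρ₀^(2*b+d)/(2*r) := by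
        rw [show (2*b+d-1) = (2*b+d)-1 by ring, Real.rpow_sub hx0, Real.rpow_one]
        exact div_le_div₀ (by positivity)
          (Real.rpow_le_rpow hx0.le hx.2 (by positivity)) h2r hx.1
      calc Real.exp (-π * (r^(-d) - x^(-d)) / (a₂*d)) * x^(2*b+d-1)
          ≤ Real.exp (-A*r^(-d)) * (ρ₀^(2*b+d)/(2*r)) := by
            apply mul_le_mul (Real.exp_le_exp.mpr hexple) hpow
              (Real.rpow_nonneg hx0.le _) (Real.exp_pos _).le
        _ = K := rfl
    have hI2 := intervalIntegral.integral_mono_on hr2ρ hint2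
      (intervalIntegrable_const) hmono2
    rw [intervalIntegral.integral_const, smul_eq_mul] at hI2
    refine hI2.trans ?_
    have step1 : (ρ₀ - 2*r) * K ≤ ρ₀ * K := by
      apply mul_le_mul_of_nonneg_right (by linarith) hK0
    refine step1.trans ?_
    have step2 : ρ₀ * K ≤ ρ₀ * (r^(2*b+2*d+1) * (ρ₀^(2*b+d)/(2*r))) := by
      apply mul_le_mul_of_nonneg_left _ hρ.le
      apply mul_le_mul_of_nonneg_right hexp (by positivity)
    refine step2.trans (le_of_eq ?_)
    have e4 : r^(2*b+2*d+1) = r^(2*b+2*d) * r := by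
      rw [Real.rpow_add_one hr0.ne']
    have e5 : ρ₀^(2*b+d+1) = ρ₀^(2*b+d) * ρ₀ := by
      rw [Real.rpow_add_one hρ.ne']
    rw [e4, e5]
    field_simp
  linarith [claim1, claim2]
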